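/- For every formula φ in multi-agent modal logic K_n and every finite set Q of propositional variables, there exists a formula ψ (the forgetting ∃Q.φ) such that: (1) φ ⊨ ψ; (2) no variable of Q occurs in ψ; and (3) for every formula η not containing variables of Q, φ ⊨ η iff ψ ⊨ η. Moreover ψ is unique up to logical equivalence. -/

import Mathlib

universe u v

inductive Fm (A P : Type) : Type
  | tru : Fm A P
  | var : P → Fm A P
  | neg : Fm A P → Fm A P
  | and : Fm A P → Fm A P → Fm A P
  | box : A → Fm A P → Fm A P

namespace Fm
variable {A P : Type}
def or (φ ψ : Fm A P) : Fm A P := neg ((neg φ).and (neg ψ))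
def bot : Fm A P := neg tru
def dia (i : A) (φ : Fm A P) : Fm A P := neg (box i (neg φ))
end Fm

structure KM (A P : Type) where
  S : Type
  R : A → S → S → Prop
  V : S → P → Prop

variable {A P : Type}

def Sat (M : KM A P) : M.S → Fm A P → Prop
  | _, .tru => True
  | s, .var p => M.V s p
  | s, .neg φ => ¬ Sat M s φ
  | s, .and φ ψ => Sat M s φ ∧ Sat M s ψ
  | s, .box i φ => ∀ t, M.R i s t → Sat M t φ

def Satisfiable (φ : Fm A P) : Prop := ∃ (M : KM A P) (s : M.S), Sat M s φ

def Entails (φ ψ : Fm A P) : Prop := ∀ (M : KM A P) (s : M.S), Sat M s φ → Sat M s ψ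

def FEquiv (φ ψ : Fm A P) : Prop := Entails φ ψ ∧ Entails ψ φ

def IsProp : Fm A P → Prop
  | .tru => True
  | .var _ => True
  | .neg φ => IsProp φ
  | .and φ ψ => IsProp φ ∧ IsProp ψ
  | .box _ _ => False

def Basic (φ : Fm A P) : Prop :=
  IsProp φ ∨ (∃ i ψ, φ = Fm.box i ψ) ∨ (∃ i ψ, φ = Fm.dia i ψ)

def conj : List (Fm A P) → Fm A P
  | [] => Fm.tru
  | φ :: L => φ.and (conj L)

def disj : List (Fm A P) → Fm A P
  | [] => Fm.bot
  | φ :: L => φ.or (disj L)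

def EpTerm (L : List (Fm A P)) : Prop := ∀ c ∈ L, Basic c

def LogSep (L : List (Fm A P)) : Prop :=
  ∀ η : Fm A P, Basic η → Entails (conj L) η → ∃ α ∈ L, Entails α η

def fvars : Fm A P → Set P
  | .tru => ∅
  | .var p => {p}
  | .neg φ => fvars φ
  | .and φ ψ => fvars φ ∪ fvars ψ
  | .box _ φ => fvars φ

def fsize : Fm A P → ℕ
  | .tru => 1
  | .var _ => 1
  | .neg φ => fsize φ + 1
  | .and φ ψ => fsize φ + fsize ψ + 1
  | .box _ φ => fsize φ + 1

open scoped Classical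

namespace Forget

/-! ### Basic satisfaction lemmas -/

theorem sat_or {M : KM A P} {s : M.S} {φ ψ : Fm A P} :
    Sat M s (Fm.or φ ψ) ↔ Sat M s φ ∨ Sat M s ψ := by
  simp [Fm.or, Sat]; tauto

theorem sat_dia {M : KM A P} {s : M.S} {i : A} {φ : Fm A P} :
    Sat M s (Fm.dia i φ) ↔ ∃ t, M.R i s t ∧ Sat M t φ := by
  simp [Fm.dia, Sat]

theorem sat_conj {M : KM A P} {s : M.S} :
    ∀ {L : List (Fm A P)}, Sat M s (conj L) ↔ ∀ χ ∈ L, Sat M s χ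
  | [] => by simp [conj, Sat]
  | χ :: L => by simp [conj, Sat, sat_conj (L := L)]

theorem sat_disj {M : KM A P} {s : M.S} :
    ∀ {L : List (Fm A P)}, Sat M s (disj L) ↔ ∃ χ ∈ L, Sat M s χ
  | [] => by simp [disj, Fm.bot, Sat]
  | χ :: L => by simp [disj, sat_or, sat_disj (L := L)]

/-! ### syntactic measures -/

def dep : Fm A P → ℕ
  | .tru => 0
  | .var _ => 0
  | .neg φ => dep φ
  | .and φ ψ => max (dep φ) (dep ψ)
  | .box _ φ => dep φ + 1

def agOf : Fm A P → List A
  | .tru => []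
  | .var _ => []
  | .neg φ => agOf φ
  | .and φ ψ => agOf φ ++ agOf ψ
  | .box i φ => i :: agOf φ

def varList : Fm A P → List P
  | .tru => []
  | .var p => [p]
  | .neg φ => varList φ
  | .and φ ψ => varList φ ++ varList ψ
  | .box _ φ => varList φ

theorem mem_varList {φ : Fm A P} {p : P} (h : p ∈ fvars φ) : p ∈ varList φ := by
  induction φ <;> simp_all [fvars, varList] <;> tauto

theorem fvars_conj {p : P} : ∀ {L : List (Fm A P)}, p ∈ fvars (conj L) → ∃ χ ∈ L, p ∈ fvars χ
  | [] => by simp [conj, fvars]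
  | χ :: L => by
      intro h
      rcases (by exact h : p ∈ fvars χ ∪ fvars (conj L)) with h | h
      · exact ⟨χ, by simp, h⟩
      · obtain ⟨χ', h1, h2⟩ := fvars_conj h
        exact ⟨χ', by simp [h1], h2⟩

theorem fvars_or {φ ψ : Fm A P} : fvars (Fm.or φ ψ) = fvars φ ∪ fvars ψ := rfl

theorem fvars_dia {i : A} {φ : Fm A P} : fvars (Fm.dia i φ) = fvars φ := rfl

theorem fvars_disj {p : P} : ∀ {L : List (Fm A P)}, p ∈ fvars (disj L) → ∃ χ ∈ L, p ∈ fvars χ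
  | [] => by simp [disj, Fm.bot, fvars]
  | χ :: L => by
      intro h
      rcases (by exact h : p ∈ fvars χ ∪ fvars (disj L)) with h | h
      · exact ⟨χ, by simp, h⟩
      · obtain ⟨χ', h1, h2⟩ := fvars_disj h
        exact ⟨χ', by simp [h1], h2⟩

/-! ### depth-bounded types over a finite vocabulary -/

def Ty (nv na : ℕ) : ℕ → Type
  | 0 => Fin nv → Bool
  | k+1 => (Fin nv → Bool) × (Fin na → Ty nv na k → Bool)

noncomputable def tyFintype (nv na : ℕ) : ∀ k, Fintype (Ty nv na k)
  | 0 => inferInstanceAs (Fintype (Fin nv → Bool))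
  | k+1 =>
      letI := tyFintype nv na k
      letI : DecidableEq (Ty nv na k) := Classical.decEq _
      inferInstanceAs (Fintype ((Fin nv → Bool) × (Fin na → Ty nv na k → Bool)))

noncomputable def tyList (nv na k : ℕ) : List (Ty nv na k) :=
  (@Finset.univ _ (tyFintype nv na k)).toList

theorem mem_tyList {nv na k : ℕ} (τ : Ty nv na k) : τ ∈ tyList nv na k :=
  Finset.mem_toList.2 (@Finset.mem_univ _ (tyFintype nv na k) τ)

variable (vs : List P) (ag : List A)

noncomputable def tpe (M : KM A P) : ∀ k, M.S → Ty vs.length ag.length k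
  | 0, s => fun j => decide (M.V s (vs.get j))
  | k+1, s => ⟨fun j => decide (M.V s (vs.get j)),
      fun a τ => decide (∃ t, M.R (ag.get a) s t ∧ tpe M k t = τ)⟩

noncomputable def fm0 (b : Fin vs.length → Bool) : Fm A P :=
  conj ((List.finRange vs.length).map fun j =>
    if b j then .var (vs.get j) else .neg (.var (vs.get j)))

noncomputable def fm : ∀ k, Ty vs.length ag.length k → Fm A P
  | 0, b => fm0 vs b
  | k+1, τ => (fm0 vs τ.1).and <| conj <| (List.finRange ag.length).map fun a =>
      Fm.and
        (conj (((tyList vs.length ag.length k).filter fun σ => τ.2 a σ).map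
          fun σ => Fm.dia (ag.get a) (fm k σ)))
        (Fm.box (ag.get a)
          (disj (((tyList vs.length ag.length k).filter fun σ => τ.2 a σ).map (fm k))))

theorem fvars_fm0 {b : Fin vs.length → Bool} {p : P} (h : p ∈ fvars (fm0 (A := A) vs b)) :
    p ∈ vs := by
  obtain ⟨χ, hχ, hp⟩ := fvars_conj h
  obtain ⟨j, -, rfl⟩ := List.mem_map.1 hχ
  have : p = vs.get j := by
    by_cases hb : b j <;> simp [hb, fvars] at hp <;> exact hp
  exact this ▸ vs.get_mem _

theorem fvars_fm : ∀ (k : ℕ) (τ : Ty vs.length ag.length k) (p : P),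
    p ∈ fvars (fm vs ag k τ) → p ∈ vs
  | 0, b => fun _ h => fvars_fm0 vs h
  | k+1, τ => by
      intro p h
      rcases (by exact h : p ∈ fvars (fm0 vs τ.1) ∪ _) with h | h
      · exact fvars_fm0 vs h
      · obtain ⟨χ, hχ, hp⟩ := fvars_conj h
        obtain ⟨a, -, rfl⟩ := List.mem_map.1 hχ
        rcases (by exact hp : p ∈ _ ∪ _) with hp | hp
        · obtain ⟨χ', hχ', hp'⟩ := fvars_conj hp
          obtain ⟨σ, -, rfl⟩ := List.mem_map.1 hχ'
          exact fvars_fm k σ p (by rwa [fvars_dia] at hp')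
        · rw [show fvars (Fm.box (ag.get a) _) = fvars _ from rfl] at hp
          obtain ⟨χ', hχ', hp'⟩ := fvars_disj hp
          obtain ⟨σ, -, rfl⟩ := List.mem_map.1 hχ'
          exact fvars_fm k σ p hp'
theorem sat_fm0 (M : KM A P) (s : M.S) (b : Fin vs.length → Bool) :
    Sat M s (fm0 vs b) ↔ tpe vs ag M 0 s = b := by
  rw [fm0, sat_conj, tpe]
  constructor
  · intro h
    funext j
    have := h _ (List.mem_map.2 ⟨j, List.mem_finRange j, rfl⟩)
    cases hb : b j
    · rw [hb] at this
      simp only [Bool.false_eq_true, if_false] at this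
      exact decide_eq_false this
    · rw [hb] at this
      simp only [if_true] at this
      exact decide_eq_true this
  · rintro rfl χ hχ
    obtain ⟨j, -, rfl⟩ := List.mem_map.1 hχ
    by_cases hd : M.V s (vs.get j)
    · have hb : decide (M.V s (vs.get j)) = true := decide_eq_true hd
      simp only [hb, if_true]
      exact hd
    · have hb : decide (M.V s (vs.get j)) = false := decide_eq_false hd
      simp only [hb, Bool.false_eq_true, if_false]
      exact hd

theorem tpe_succ_eq_iff (M : KM A P) (k : ℕ) (τ : Ty vs.length ag.length (k+1)) (s : M.S) :
    tpe vs ag M (k+1) s = τ ↔ tpe vs ag M 0 s = τ.1 ∧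
      ∀ (a : Fin ag.length),
        (∀ σ, τ.2 a σ = true → ∃ t, M.R (ag.get a) s t ∧ tpe vs ag M k t = σ) ∧
        (∀ t, M.R (ag.get a) s t → τ.2 a (tpe vs ag M k t) = true) := by
  constructor
  · rintro rfl
    exact ⟨rfl, fun a => ⟨fun σ h => of_decide_eq_true h,
      fun t ht => decide_eq_true ⟨t, ht, rfl⟩⟩⟩
  · rintro ⟨h0, h2⟩
    rw [tpe]
    refine Prod.ext h0 ?_
    funext a σ
    cases hσ : τ.2 a σ
    · refine decide_eq_false ?_
      rintro ⟨t, ht, hte⟩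
      have := (h2 a).2 t ht
      rw [hte, hσ] at this
      exact Bool.false_ne_true this
    · exact decide_eq_true ((h2 a).1 σ hσ)

theorem sat_fm (M : KM A P) : ∀ (k : ℕ) (τ : Ty vs.length ag.length k) (s : M.S),
    Sat M s (fm vs ag k τ) ↔ tpe vs ag M k s = τ
  | 0, b, s => sat_fm0 vs ag M s b
  | k+1, τ, s => by
      have IH := fun (σ : Ty vs.length ag.length k) (t : M.S) => sat_fm M k σ t
      have hfilter : ∀ (σ : Ty vs.length ag.length k) (a : Fin ag.length),
          σ ∈ (tyList vs.length ag.length k).filter (fun σ => τ.2 a σ) ↔ τ.2 a σ = true := by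
        intro σ a
        rw [List.mem_filter]
        exact ⟨fun h => h.2, fun h => ⟨mem_tyList σ, h⟩⟩
      rw [tpe_succ_eq_iff, fm]
      constructor
      · intro h
        obtain ⟨h0, hcl⟩ := (h : Sat M s _ ∧ Sat M s _)
        rw [sat_conj] at hcl
        refine ⟨(sat_fm0 vs ag M s τ.1).1 h0, fun a => ?_⟩
        have hc := hcl _ (List.mem_map.2 ⟨a, List.mem_finRange a, rfl⟩)
        obtain ⟨hdia, hbox⟩ := (hc : Sat M s _ ∧ Sat M s _)
        constructor
        · intro σ hσ
          have hx := (sat_conj.1 hdia) _ (List.mem_map.2 ⟨σ, (hfilter σ a).2 hσ, rfl⟩)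
          rw [sat_dia] at hx
          obtain ⟨t, ht, hs⟩ := hx
          exact ⟨t, ht, (IH σ t).1 hs⟩
        · intro t ht
          have hx := hbox t ht
          obtain ⟨χ, hχ, hs⟩ := sat_disj.1 hx
          obtain ⟨σ, hσ, rfl⟩ := List.mem_map.1 hχ
          rw [(IH σ t).1 hs]
          exact (hfilter σ a).1 hσ
      · rintro ⟨h0, h2⟩
        refine ⟨(sat_fm0 vs ag M s τ.1).2 h0, ?_⟩
        rw [sat_conj]
        intro χ hχ
        obtain ⟨a, -, rfl⟩ := List.mem_map.1 hχ
        refine ⟨?_, ?_⟩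
        · rw [sat_conj]
          intro χ' hχ'
          obtain ⟨σ, hσ, rfl⟩ := List.mem_map.1 hχ'
          rw [sat_dia]
          obtain ⟨t, ht, hte⟩ := (h2 a).1 σ ((hfilter σ a).1 hσ)
          exact ⟨t, ht, (IH σ t).2 hte⟩
        · intro t ht
          rw [sat_disj]
          exact ⟨fm vs ag k (tpe vs ag M k t),
            List.mem_map.2 ⟨_, (hfilter _ a).2 ((h2 a).2 t ht), rfl⟩, (IH _ t).2 rfl⟩
theorem tpe_succ_iff {M M' : KM A P} {k : ℕ} {t : M.S} {u : M'.S}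
    (h : tpe vs ag M (k+1) t = tpe vs ag M' (k+1) u) (a : Fin ag.length)
    (τ : Ty vs.length ag.length k) :
    (∃ t', M.R (ag.get a) t t' ∧ tpe vs ag M k t' = τ) ↔
    (∃ u', M'.R (ag.get a) u u' ∧ tpe vs ag M' k u' = τ) := by
  rw [tpe, tpe] at h
  replace h := Prod.mk.inj h
  have h3 := congrFun (congrFun h.2 a) τ
  simp only [decide_eq_decide] at h3
  exact h3

theorem tpe_var {M M' : KM A P} {k : ℕ} {t : M.S} {u : M'.S}
    (h : tpe vs ag M k t = tpe vs ag M' k u) {p : P} (hp : p ∈ vs) :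
    M.V t p ↔ M'.V u p := by
  obtain ⟨j, hj⟩ := List.get_of_mem hp
  subst hj
  cases k with
  | zero =>
      rw [tpe, tpe] at h
      have := congrFun h j
      simp only [decide_eq_decide] at this
      exact this
  | succ k =>
      rw [tpe, tpe] at h
      replace h := Prod.mk.inj h
      have := congrFun h.1 j
      simp only [decide_eq_decide] at this
      exact this
/-! ### The amalgamated model -/

noncomputable def vsOf (φ : Fm A P) (Q : Finset P) : List P :=
  (varList φ).filter fun p => decide (p ∉ Q)

theorem mem_vsOf {φ : Fm A P} {Q : Finset P} {p : P} :
    p ∈ vsOf φ Q ↔ p ∈ varList φ ∧ p ∉ Q := by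
  rw [vsOf, List.mem_filter]
  simp

noncomputable def NM (φ : Fm A P) (Q : Finset P) (M M₀ : KM A P) : KM A P where
  S := (M.S × M₀.S × ℕ) ⊕ M.S
  R := fun i x y =>
    match x, y with
    | .inl (t, u, k), .inl (t', u', k') =>
        k = k' + 1 ∧ M.R i t t' ∧ M₀.R i u u' ∧ i ∈ agOf φ ∧
          tpe (vsOf φ Q) (agOf φ) M k' t' = tpe (vsOf φ Q) (agOf φ) M₀ k' u'
    | .inl (t, _, k), .inr t' => M.R i t t' ∧ (k = 0 ∨ i ∉ agOf φ)
    | .inr t, .inr t' => M.R i t t'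
    | .inr _, .inl _ => False
  V := fun x p =>
    match x with
    | .inl (t, u, _) => if p ∈ Q then M₀.V u p else M.V t p
    | .inr t => M.V t p

theorem satB (φ : Fm A P) (Q : Finset P) (M M₀ : KM A P) :
    ∀ (χ : Fm A P) (k : ℕ) (t : M.S) (u : M₀.S),
      dep χ ≤ k →
      (∀ p ∈ fvars χ, p ∈ vsOf φ Q ∨ p ∈ Q) →
      (∀ i ∈ agOf χ, i ∈ agOf φ) →
      tpe (vsOf φ Q) (agOf φ) M k t = tpe (vsOf φ Q) (agOf φ) M₀ k u →
      (Sat (NM φ Q M M₀) (.inl (t, u, k)) χ ↔ Sat M₀ u χ) := by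
  intro χ
  induction χ with
  | tru => intro k t u _ _ _ _; exact Iff.rfl
  | var p =>
      intro k t u _ hv _ hty
      rcases hv p rfl with h | h
      · have hpQ : p ∉ Q := (mem_vsOf.1 h).2
        show (if p ∈ Q then M₀.V u p else M.V t p) ↔ M₀.V u p
        rw [if_neg hpQ]
        exact tpe_var _ _ hty h
      · show (if p ∈ Q then M₀.V u p else M.V t p) ↔ M₀.V u p
        rw [if_pos h]
  | neg χ ih =>
      intro k t u hd hv ha hty
      exact not_congr (ih k t u hd hv ha hty)
  | and χ₁ χ₂ ih₁ ih₂ =>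
      intro k t u hd hv ha hty
      have h1 := ih₁ k t u (le_trans (le_max_left _ _) hd)
        (fun p hp => hv p (Set.mem_union_left _ hp))
        (fun i hi => ha i (List.mem_append.2 (Or.inl hi))) hty
      have h2 := ih₂ k t u (le_trans (le_max_right _ _) hd)
        (fun p hp => hv p (Set.mem_union_right _ hp))
        (fun i hi => ha i (List.mem_append.2 (Or.inr hi))) hty
      exact and_congr h1 h2
  | box i χ ih =>
      intro k t u hd hv ha hty
      have hiφ : i ∈ agOf φ := ha i List.mem_cons_self
      have hd' : dep χ + 1 ≤ k := hd
      obtain ⟨k', rfl⟩ : ∃ k', k = k' + 1 := ⟨k - 1, by omega⟩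
      have hdχ : dep χ ≤ k' := by omega
      have ha' : ∀ i' ∈ agOf χ, i' ∈ agOf φ := fun i' hi' => ha i' (List.mem_cons_of_mem _ hi')
      obtain ⟨a, hag⟩ := List.get_of_mem hiφ
      constructor
      · intro h u' hu'
        have hx := (tpe_succ_iff (vsOf φ Q) (agOf φ) hty a
            (tpe (vsOf φ Q) (agOf φ) M₀ k' u')).2 ⟨u', by rw [hag]; exact hu', rfl⟩
        obtain ⟨t', ht', hte⟩ := hx
        rw [hag] at ht'
        have hedge : (NM φ Q M M₀).R i (.inl (t, u, k' + 1)) (.inl (t', u', k')) :=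
          ⟨rfl, ht', hu', hiφ, hte⟩
        exact (ih k' t' u' hdχ hv ha' hte).1 (h _ hedge)
      · intro h x hx
        cases x with
        | inl y =>
            obtain ⟨t', u', k''⟩ := y
            obtain ⟨hk, hR, hR₀, -, hte⟩ := hx
            have hk2 : k' = k'' := by omega
            subst hk2
            exact (ih k' t' u' hdχ hv ha' hte).2 (h u' hR₀)
        | inr t' =>
            obtain ⟨-, hk0⟩ := hx
            rcases hk0 with h0 | hni
            · omega
            · exact absurd hiφ hni

theorem satC (φ : Fm A P) (Q : Finset P) (M M₀ : KM A P) :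
    ∀ (η : Fm A P), (∀ q ∈ Q, q ∉ fvars η) →
      (∀ (t : M.S) (u : M₀.S) (k : ℕ),
          tpe (vsOf φ Q) (agOf φ) M k t = tpe (vsOf φ Q) (agOf φ) M₀ k u →
          (Sat (NM φ Q M M₀) (.inl (t, u, k)) η ↔ Sat M t η)) ∧
      (∀ t : M.S, Sat (NM φ Q M M₀) (.inr t) η ↔ Sat M t η) := by
  intro η
  induction η with
  | tru => intro _; exact ⟨fun _ _ _ _ => Iff.rfl, fun _ => Iff.rfl⟩
  | var p =>
      intro hQ
      have hpQ : p ∉ Q := fun h => hQ p h rfl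
      refine ⟨fun t u k _ => ?_, fun t => Iff.rfl⟩
      show (if p ∈ Q then M₀.V u p else M.V t p) ↔ M.V t p
      rw [if_neg hpQ]
  | neg η ih =>
      intro hQ
      obtain ⟨ih1, ih2⟩ := ih hQ
      exact ⟨fun t u k h => not_congr (ih1 t u k h), fun t => not_congr (ih2 t)⟩
  | and η₁ η₂ ih₁ ih₂ =>
      intro hQ
      obtain ⟨ih11, ih12⟩ := ih₁ fun q hq hf => hQ q hq (Set.mem_union_left _ hf)
      obtain ⟨ih21, ih22⟩ := ih₂ fun q hq hf => hQ q hq (Set.mem_union_right _ hf)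
      exact ⟨fun t u k h => and_congr (ih11 t u k h) (ih21 t u k h),
        fun t => and_congr (ih12 t) (ih22 t)⟩
  | box i η ih =>
      intro hQ
      obtain ⟨ih1, ih2⟩ := ih hQ
      constructor
      · intro t u k hty
        constructor
        · intro h t' ht'
          by_cases hik : i ∈ agOf φ ∧ k ≠ 0
          · obtain ⟨hi, hk⟩ := hik
            obtain ⟨k', rfl⟩ : ∃ k', k = k' + 1 := ⟨k - 1, by omega⟩
            obtain ⟨a, hag⟩ := List.get_of_mem hi
            have hx := (tpe_succ_iff (vsOf φ Q) (agOf φ) hty a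
                (tpe (vsOf φ Q) (agOf φ) M k' t')).1 ⟨t', by rw [hag]; exact ht', rfl⟩
            obtain ⟨u', hu', hte⟩ := hx
            rw [hag] at hu'
            have hedge : (NM φ Q M M₀).R i (.inl (t, u, k' + 1)) (.inl (t', u', k')) :=
              ⟨rfl, ht', hu', hi, hte.symm⟩
            exact (ih1 t' u' k' hte.symm).1 (h _ hedge)
          · have hor : k = 0 ∨ i ∉ agOf φ := by tauto
            have hedge : (NM φ Q M M₀).R i (.inl (t, u, k)) (.inr t') := ⟨ht', hor⟩
            exact (ih2 t').1 (h _ hedge)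
        · intro h x hx
          cases x with
          | inl y =>
              obtain ⟨t', u', k'⟩ := y
              obtain ⟨-, hR, -, -, hte⟩ := hx
              exact (ih1 t' u' k' hte).2 (h t' hR)
          | inr t' =>
              obtain ⟨hR, -⟩ := hx
              exact (ih2 t').2 (h t' hR)
      · intro t
        constructor
        · intro h t' ht'
          exact (ih2 t').1 (h (.inr t') ht')
        · intro h x hx
          cases x with
          | inl y =>
              obtain ⟨t', u', k'⟩ := y
              exact hx.elim
          | inr t' => exact (ih2 t').2 (h t' hx)
end Forget
theorem forgetting_exists_and_unique [Countable P] (φ : Fm A P) (Q : Finset P) :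
    (∃ ψ : Fm A P, Entails φ ψ ∧ (∀ q ∈ Q, q ∉ fvars ψ) ∧
       (∀ η : Fm A P, (∀ q ∈ Q, q ∉ fvars η) → (Entails φ η ↔ Entails ψ η))) ∧
    (∀ ψ₁ ψ₂ : Fm A P,
       (Entails φ ψ₁ ∧ (∀ q ∈ Q, q ∉ fvars ψ₁) ∧
         (∀ η : Fm A P, (∀ q ∈ Q, q ∉ fvars η) → (Entails φ η ↔ Entails ψ₁ η))) →
       (Entails φ ψ₂ ∧ (∀ q ∈ Q, q ∉ fvars ψ₂) ∧
         (∀ η : Fm A P, (∀ q ∈ Q, q ∉ fvars η) → (Entails φ η ↔ Entails ψ₂ η))) →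
       FEquiv ψ₁ ψ₂) := by
  classical
  constructor
  · -- existence
    have hL : ∀ τ ∈ ((Forget.tyList (Forget.vsOf φ Q).length (Forget.agOf φ).length
          (Forget.dep φ)).filter fun τ => decide (∃ (M : KM A P) (s : M.S),
            Sat M s φ ∧ Forget.tpe (Forget.vsOf φ Q) (Forget.agOf φ) M (Forget.dep φ) s = τ)),
        ∃ (M : KM A P) (s : M.S),
          Sat M s φ ∧ Forget.tpe (Forget.vsOf φ Q) (Forget.agOf φ) M (Forget.dep φ) s = τ := by
      intro τ hτ
      exact of_decide_eq_true (List.mem_filter.1 hτ).2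
    have hent : Entails φ (disj ((((Forget.tyList (Forget.vsOf φ Q).length
        (Forget.agOf φ).length (Forget.dep φ)).filter
          fun τ => decide (∃ (M : KM A P) (s : M.S),
            Sat M s φ ∧ Forget.tpe (Forget.vsOf φ Q) (Forget.agOf φ) M (Forget.dep φ) s = τ))).map
        (Forget.fm (Forget.vsOf φ Q) (Forget.agOf φ) (Forget.dep φ)))) := by
      intro M s h
      rw [Forget.sat_disj]
      refine ⟨Forget.fm (Forget.vsOf φ Q) (Forget.agOf φ) (Forget.dep φ)
          (Forget.tpe (Forget.vsOf φ Q) (Forget.agOf φ) M (Forget.dep φ) s),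
        List.mem_map.2 ⟨_, ?_, rfl⟩,
        (Forget.sat_fm (Forget.vsOf φ Q) (Forget.agOf φ) M (Forget.dep φ) _ s).2 rfl⟩
      rw [List.mem_filter]
      exact ⟨Forget.mem_tyList _, decide_eq_true ⟨M, s, h, rfl⟩⟩
    refine ⟨_, hent, ?_, ?_⟩
    · -- variable condition
      intro q hq hf
      obtain ⟨χ, hχ, hp⟩ := Forget.fvars_disj hf
      obtain ⟨τ, -, rfl⟩ := List.mem_map.1 hχ
      have := Forget.fvars_fm (Forget.vsOf φ Q) (Forget.agOf φ) (Forget.dep φ) τ q hp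
      exact (Forget.mem_vsOf.1 this).2 hq
    · -- key property
      intro η hη
      constructor
      · intro hφη M s hψ
        obtain ⟨χ, hχ, hs⟩ := Forget.sat_disj.1 hψ
        obtain ⟨τ, hτ, rfl⟩ := List.mem_map.1 hχ
        obtain ⟨M₀, s₀, hφ₀, hte₀⟩ := hL τ hτ
        have hts := (Forget.sat_fm (Forget.vsOf φ Q) (Forget.agOf φ) M (Forget.dep φ) τ s).1 hs
        have hty : Forget.tpe (Forget.vsOf φ Q) (Forget.agOf φ) M (Forget.dep φ) s =
            Forget.tpe (Forget.vsOf φ Q) (Forget.agOf φ) M₀ (Forget.dep φ) s₀ := by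
          rw [hts, hte₀]
        have hB := Forget.satB φ Q M M₀ φ (Forget.dep φ) s s₀ le_rfl
          (fun p hp => by
            by_cases hpQ : p ∈ Q
            · exact Or.inr hpQ
            · exact Or.inl (Forget.mem_vsOf.2 ⟨Forget.mem_varList hp, hpQ⟩))
          (fun i hi => hi) hty
        have hC := (Forget.satC φ Q M M₀ η hη).1 s s₀ (Forget.dep φ) hty
        exact hC.1 (hφη _ _ (hB.2 hφ₀))
      · intro hψη M s hφs
        exact hψη M s (hent M s hφs)
  · rintro ψ₁ ψ₂ ⟨h1e, h1Q, h1i⟩ ⟨h2e, h2Q, h2i⟩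
    exact ⟨(h1i ψ₂ h2Q).1 h2e, (h2i ψ₁ h1Q).1 h1e⟩
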